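/- Retracts of horizontally right-adjointable squares are horizontally right adjointable: given two commutative squares □₀, □₁ of categories and functors, each with horizontal arrows p_i : C_i → D_i, h_i : E_i → F_i admitting right adjoints, and vertical arrows q_i, f_i, if □₀ is a retract of □₁ in the category of squares, and the Beck–Chevalley transformation q₁ p₁^R → h₁^R f₁ of □₁ is an equivalence, then the Beck–Chevalley transformation q₀ p₀^R → h₀^R f₀ of □₀ is an equivalence. -/

import Mathlib

open CategoryTheory Limits

section RetractMateAuxSect
open Category Functor Adjunction

namespace RetractMateAux

section vcompAux
variable {A : Type*} {B : Type*} {C : Type*} {D : Type*} {E : Type*} {F : Type*}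
variable [Category A] [Category B] [Category C] [Category D] [Category E] [Category F]
variable {G₁ : A ⥤ C} {G₂ : C ⥤ E} {H₁ : B ⥤ D} {H₂ : D ⥤ F}
variable {L₁ : A ⥤ B} {R₁ : B ⥤ A} {L₂ : C ⥤ D} {R₂ : D ⥤ C} {L₃ : E ⥤ F} {R₃ : F ⥤ E}
variable (adj₁ : L₁ ⊣ R₁) (adj₂ : L₂ ⊣ R₂) (adj₃ : L₃ ⊣ R₃)

def leftAdjointSquare.vcomp :
    (G₁ ⋙ L₂ ⟶ L₁ ⋙ H₁) → (G₂ ⋙ L₃ ⟶ L₂ ⋙ H₂) → ((G₁ ⋙ G₂) ⋙ L₃ ⟶ L₁ ⋙ (H₁ ⋙ H₂)) :=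
  fun α β ↦ (whiskerLeft G₁ β) ≫ (whiskerRight α H₂)

def rightAdjointSquare.vcomp :
    TwoSquare R₁ H₁ G₁ R₂ → TwoSquare R₂ H₂ G₂ R₃ → (R₁ ⋙ (G₁ ⋙ G₂) ⟶ (H₁ ⋙ H₂) ⋙ R₃) :=
  fun α β ↦ (whiskerRight α.natTrans G₂) ≫ (whiskerLeft H₁ β.natTrans)

@[simp]
lemma rightAdjointSquare.vcomp_app (α : TwoSquare R₁ H₁ G₁ R₂) (β : TwoSquare R₂ H₂ G₂ R₃)
    (x : B) : (rightAdjointSquare.vcomp α β).app x = G₂.map (α.app x) ≫ β.app (H₁.obj x) :=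
  rfl

lemma mateEquiv_vcomp' (α : G₁ ⋙ L₂ ⟶ L₁ ⋙ H₁) (β : G₂ ⋙ L₃ ⟶ L₂ ⋙ H₂) :
    (mateEquiv adj₁ adj₃) (leftAdjointSquare.vcomp α β) =
      rightAdjointSquare.vcomp (mateEquiv adj₁ adj₂ α) (mateEquiv adj₂ adj₃ β) := by
  have e := mateEquiv_vcomp adj₁ adj₂ adj₃ α β
  have hl : leftAdjointSquare.vcomp α β = TwoSquare.hComp α β := by
    ext x
    simp [leftAdjointSquare.vcomp, TwoSquare.hComp]
  have hr : rightAdjointSquare.vcomp (mateEquiv adj₁ adj₂ α) (mateEquiv adj₂ adj₃ β) =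
      TwoSquare.vComp (mateEquiv adj₁ adj₂ α) (mateEquiv adj₂ adj₃ β) := by
    ext x
    simp [TwoSquare.vComp]
  rw [hl, hr, e]

end vcompAux

section whisker
variable {C : Type*} {D : Type*} {E : Type*} {F : Type*}
variable [Category C] [Category D] [Category E] [Category F]
variable {G G' : C ⥤ E} {H H' : D ⥤ F} {L₁ : C ⥤ D} {R₁ : D ⥤ C} {L₂ : E ⥤ F} {R₂ : F ⥤ E}
variable (adj₁ : L₁ ⊣ R₁) (adj₂ : L₂ ⊣ R₂)

lemma mateEquiv_whiskerRight_comp (γ : G' ⟶ G) (α : G ⋙ L₂ ⟶ L₁ ⋙ H) :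
    mateEquiv adj₁ adj₂ (whiskerRight γ L₂ ≫ α) =
      whiskerLeft R₁ γ ≫ mateEquiv adj₁ adj₂ α := by
  ext d
  simp only [mateEquiv, Equiv.coe_fn_mk, CategoryTheory.NatTrans.comp_app, whiskerLeft_app,
    whiskerRight_app, comp_obj, id_obj, assoc, map_comp]
  rw [← adj₂.unit_naturality_assoc]
  simp

lemma mateEquiv_comp_whiskerLeft (δ : H ⟶ H') (α : G ⋙ L₂ ⟶ L₁ ⋙ H) :
    mateEquiv adj₁ adj₂ (α ≫ whiskerLeft L₁ δ) =
      mateEquiv adj₁ adj₂ α ≫ whiskerRight δ R₂ := by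
  ext d
  simp only [mateEquiv, Equiv.coe_fn_mk, CategoryTheory.NatTrans.comp_app, whiskerLeft_app,
    whiskerRight_app, comp_obj, id_obj, assoc, map_comp, Functor.comp_map]
  simp
  rw [← R₂.map_comp (H.map _), δ.naturality, R₂.map_comp]

end whisker

lemma mateEquiv_unitors {C : Type*} {D : Type*} [Category C] [Category D]
    {L : C ⥤ D} {R : D ⥤ C} (adj : L ⊣ R) :
    mateEquiv (G := 𝟭 C) (H := 𝟭 D) adj adj (L.leftUnitor.hom ≫ L.rightUnitor.inv) =
      R.rightUnitor.hom ≫ R.leftUnitor.inv := by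
  ext d
  simp [mateEquiv]

section cube
variable {C D E F C' D' E' F' : Type*}
variable [Category C] [Category D] [Category E] [Category F]
variable [Category C'] [Category D'] [Category E'] [Category F']
variable {p : C ⥤ D} {h : E ⥤ F} {q : C ⥤ E} {f : D ⥤ F}
variable {p' : C' ⥤ D'} {h' : E' ⥤ F'} {q' : C' ⥤ E'} {f' : D' ⥤ F'}
variable {pR : D ⥤ C} {hR : F ⥤ E} {pR' : D' ⥤ C'} {hR' : F' ⥤ E'}
variable (adjp : p ⊣ pR) (adjh : h ⊣ hR) (adjp' : p' ⊣ pR') (adjh' : h' ⊣ hR')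
variable (α : q ⋙ h ⟶ p ⋙ f) (α' : q' ⋙ h' ⟶ p' ⋙ f')
variable (uC : C ⥤ C') (uD : D ⥤ D') (uE : E ⥤ E') (uF : F ⥤ F')
variable (uP : uC ⋙ p' ≅ p ⋙ uD) (uH : uE ⋙ h' ≅ h ⋙ uF)
variable (uQ : uC ⋙ q' ≅ q ⋙ uE) (uΦ : uD ⋙ f' ≅ f ⋙ uF)

lemma mate_cube
    (cube : ∀ X : C, α'.app (uC.obj X) =
      h'.map (uQ.hom.app X) ≫ uH.hom.app (q.obj X) ≫ uF.map (α.app X) ≫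
        uΦ.inv.app (p.obj X) ≫ f'.map (uP.inv.app X)) (X : D) :
    q'.map ((mateEquiv adjp adjp' uP.hom).app X) ≫
        (mateEquiv adjp' adjh' α').app (uD.obj X) =
      uQ.hom.app (pR.obj X) ≫ uE.map ((mateEquiv adjp adjh α).app X) ≫
        (mateEquiv adjh adjh' uH.hom).app (f.obj X) ≫ hR'.map (uΦ.inv.app X) := by
  have hL : leftAdjointSquare.vcomp uP.hom α' =
      whiskerRight uQ.hom h' ≫ leftAdjointSquare.vcomp α uH.hom ≫ whiskerLeft p uΦ.inv := by
    ext Y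
    simp only [leftAdjointSquare.vcomp, CategoryTheory.NatTrans.comp_app, whiskerLeft_app,
      whiskerRight_app, comp_obj, assoc, cube Y]
    simp [← f'.map_comp]
  have e1 := mateEquiv_vcomp' adjp adjp' adjh' uP.hom α'
  have e2 := mateEquiv_vcomp' adjp adjh adjh' α uH.hom
  have e3 : mateEquiv adjp adjh' (leftAdjointSquare.vcomp uP.hom α') =
      whiskerLeft pR uQ.hom ≫ rightAdjointSquare.vcomp (mateEquiv adjp adjh α)
        (mateEquiv adjh adjh' uH.hom) ≫ whiskerRight uΦ.inv hR' := by
    rw [hL, ← assoc, mateEquiv_comp_whiskerLeft, mateEquiv_whiskerRight_comp, e2]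
    simp only [assoc]
    rfl
  rw [e1] at e3
  have := congr_arg (fun (τ : pR ⋙ (uC ⋙ q') ⟶ ((uD ⋙ f') ⋙ hR')) => τ.app X) e3
  simpa [rightAdjointSquare.vcomp] using this

end cube

section retract
variable {C D C' D' : Type*}
variable [Category C] [Category D] [Category C'] [Category D']
variable {p : C ⥤ D} {p' : C' ⥤ D'} {pR : D ⥤ C} {pR' : D' ⥤ C'}
variable (adjp : p ⊣ pR) (adjp' : p' ⊣ pR')
variable (uC : C ⥤ C') (uD : D ⥤ D') (rC : C' ⥤ C) (rD : D' ⥤ D)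
variable (ρC : uC ⋙ rC ≅ 𝟭 C) (ρD : uD ⋙ rD ≅ 𝟭 D)
variable (uP : uC ⋙ p' ≅ p ⋙ uD) (rP : rC ⋙ p ≅ p' ⋙ rD)

lemma mate_retract
    (compP : ∀ X : C, rP.hom.app (uC.obj X) ≫ rD.map (uP.hom.app X) ≫
      ρD.hom.app (p.obj X) = p.map (ρC.hom.app X)) (X : D) :
    rC.map ((mateEquiv adjp adjp' uP.hom).app X) ≫
        (mateEquiv adjp' adjp rP.hom).app (uD.obj X) =
      ρC.hom.app (pR.obj X) ≫ pR.map (ρD.inv.app X) := by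
  have hL : leftAdjointSquare.vcomp uP.hom rP.hom =
      whiskerRight ρC.hom p ≫ (p.leftUnitor.hom ≫ p.rightUnitor.inv) ≫
        whiskerLeft p ρD.inv := by
    ext Y
    have := compP Y
    simp only [leftAdjointSquare.vcomp, CategoryTheory.NatTrans.comp_app, whiskerLeft_app,
      whiskerRight_app, comp_obj, assoc, leftUnitor_hom_app, rightUnitor_inv_app, id_obj,
      id_comp, comp_id]
    rw [← this]
    simp
  have e1 := mateEquiv_vcomp' adjp adjp' adjp uP.hom rP.hom
  have e3 : mateEquiv adjp adjp (leftAdjointSquare.vcomp uP.hom rP.hom) =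
      whiskerLeft pR ρC.hom ≫ (pR.rightUnitor.hom ≫ pR.leftUnitor.inv) ≫
        whiskerRight ρD.inv pR := by
    rw [hL, ← assoc, mateEquiv_comp_whiskerLeft, mateEquiv_whiskerRight_comp,
      mateEquiv_unitors]
    simp only [assoc]
    rfl
  rw [e1] at e3
  have := congr_arg (fun (τ : pR ⋙ (uC ⋙ rC) ⟶ ((uD ⋙ rD) ⋙ pR)) => τ.app X) e3
  simpa [rightAdjointSquare.vcomp] using this

end retract

lemma retract_isIso {C : Type*} [Category C] {A A' B B' : C}
    (a : A ⟶ A') (g : B ⟶ B') [IsIso g]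
    (i : A ⟶ B) (i' : A' ⟶ B') (r : B ⟶ A) (r' : B' ⟶ A')
    (comm1 : i ≫ g = a ≫ i') (comm2 : r ≫ a = g ≫ r')
    (hr : i ≫ r = 𝟙 A) (hr' : i' ≫ r' = 𝟙 A') : IsIso a := by
  refine ⟨i' ≫ inv g ≫ r, ?_, ?_⟩
  · rw [← assoc, ← comm1, assoc, IsIso.hom_inv_id_assoc, hr]
  · rw [assoc, assoc, comm2, IsIso.inv_hom_id_assoc, hr']

end RetractMateAux

end RetractMateAuxSect

open RetractMateAux

/-- Retracts of horizontally right-adjointable squares are horizontally right adjointable: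
given squares `□₀`, `□₁` of categories with horizontal left adjoints `p_i` (top) and `h_i`
(bottom), vertical functors `q_i`, `f_i`, commuting isomorphisms `α_i : q_i ⋙ h_i ≅ p_i ⋙ f_i`,
and a retraction of `□₀` onto a retract of `□₁` (inclusion functors `u`, retraction functors `r`
at each corner, commuting with all the data, with `r ∘ u ≅ id`), if the Beck–Chevalley (mate)
transformation of `□₁` is an isomorphism, then so is that of `□₀`. -/
theorem stmt_16
    {C₀ D₀ E₀ F₀ : Type*} [Category C₀] [Category D₀] [Category E₀] [Category F₀]
    {C₁ D₁ E₁ F₁ : Type*} [Category C₁] [Category D₁] [Category E₁] [Category F₁]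
    (p₀ : C₀ ⥤ D₀) (h₀ : E₀ ⥤ F₀) (q₀ : C₀ ⥤ E₀) (f₀ : D₀ ⥤ F₀)
    (p₁ : C₁ ⥤ D₁) (h₁ : E₁ ⥤ F₁) (q₁ : C₁ ⥤ E₁) (f₁ : D₁ ⥤ F₁)
    (pR₀ : D₀ ⥤ C₀) (hR₀ : F₀ ⥤ E₀) (pR₁ : D₁ ⥤ C₁) (hR₁ : F₁ ⥤ E₁)
    (adjp₀ : p₀ ⊣ pR₀) (adjh₀ : h₀ ⊣ hR₀) (adjp₁ : p₁ ⊣ pR₁) (adjh₁ : h₁ ⊣ hR₁)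
    (α₀ : q₀ ⋙ h₀ ⟶ p₀ ⋙ f₀) (α₁ : q₁ ⋙ h₁ ⟶ p₁ ⋙ f₁) [IsIso α₀] [IsIso α₁]
    (uC : C₀ ⥤ C₁) (uD : D₀ ⥤ D₁) (uE : E₀ ⥤ E₁) (uF : F₀ ⥤ F₁)
    (rC : C₁ ⥤ C₀) (rD : D₁ ⥤ D₀) (rE : E₁ ⥤ E₀) (rF : F₁ ⥤ F₀)
    (ρC : uC ⋙ rC ≅ 𝟭 C₀) (ρD : uD ⋙ rD ≅ 𝟭 D₀)
    (ρE : uE ⋙ rE ≅ 𝟭 E₀) (ρF : uF ⋙ rF ≅ 𝟭 F₀)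
    (uP : uC ⋙ p₁ ≅ p₀ ⋙ uD) (uH : uE ⋙ h₁ ≅ h₀ ⋙ uF)
    (uQ : uC ⋙ q₁ ≅ q₀ ⋙ uE) (uΦ : uD ⋙ f₁ ≅ f₀ ⋙ uF)
    (rP : rC ⋙ p₀ ≅ p₁ ⋙ rD) (rH : rE ⋙ h₀ ≅ h₁ ⋙ rF)
    (rQ : rC ⋙ q₀ ≅ q₁ ⋙ rE) (rΦ : rD ⋙ f₀ ≅ f₁ ⋙ rF)
    (cubeU : ∀ X : C₀, α₁.app (uC.obj X) =
      h₁.map (uQ.hom.app X) ≫ uH.hom.app (q₀.obj X) ≫ uF.map (α₀.app X) ≫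
        uΦ.inv.app (p₀.obj X) ≫ f₁.map (uP.inv.app X))
    (cubeR : ∀ X : C₁, α₀.app (rC.obj X) =
      h₀.map (rQ.hom.app X) ≫ rH.hom.app (q₁.obj X) ≫ rF.map (α₁.app X) ≫
        rΦ.inv.app (p₁.obj X) ≫ f₀.map (rP.inv.app X))
    (compP : ∀ X : C₀, rP.hom.app (uC.obj X) ≫ rD.map (uP.hom.app X) ≫
        ρD.hom.app (p₀.obj X) = p₀.map (ρC.hom.app X))
    (compQ : ∀ X : C₀, rQ.hom.app (uC.obj X) ≫ rE.map (uQ.hom.app X) ≫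
        ρE.hom.app (q₀.obj X) = q₀.map (ρC.hom.app X))
    (compH : ∀ X : E₀, rH.hom.app (uE.obj X) ≫ rF.map (uH.hom.app X) ≫
        ρF.hom.app (h₀.obj X) = h₀.map (ρE.hom.app X))
    (compΦ : ∀ X : D₀, rΦ.hom.app (uD.obj X) ≫ rF.map (uΦ.hom.app X) ≫
        ρF.hom.app (f₀.obj X) = f₀.map (ρD.hom.app X))
    (hmate₁ : IsIso (mateEquiv adjp₁ adjh₁ α₁)) :
    IsIso (mateEquiv adjp₀ adjh₀ α₀) := by
  haveI : IsIso (TwoSquare.natTrans (mateEquiv adjp₁ adjh₁ α₁)) := hmate₁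
  haveI : ∀ Y, IsIso ((mateEquiv adjp₁ adjh₁ α₁).app Y) := fun Y =>
    NatIso.isIso_app_of_isIso (TwoSquare.natTrans (mateEquiv adjp₁ adjh₁ α₁)) Y
  have key : ∀ X : D₀, IsIso ((mateEquiv adjp₀ adjh₀ α₀).app X) := by
    intro X
    refine retract_isIso _ (rE.map ((mateEquiv adjp₁ adjh₁ α₁).app (uD.obj X)))
      (ρE.inv.app (q₀.obj (pR₀.obj X)) ≫ rE.map (uQ.inv.app (pR₀.obj X)) ≫
        rE.map (q₁.map ((mateEquiv adjp₀ adjp₁ uP.hom).app X)))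
      (ρE.inv.app (hR₀.obj (f₀.obj X)) ≫
        rE.map ((mateEquiv adjh₀ adjh₁ uH.hom).app (f₀.obj X)) ≫
        rE.map (hR₁.map (uΦ.inv.app X)))
      (rQ.inv.app (pR₁.obj (uD.obj X)) ≫
        q₀.map ((mateEquiv adjp₁ adjp₀ rP.hom).app (uD.obj X)) ≫
        q₀.map (pR₀.map (ρD.hom.app X)))
      ((mateEquiv adjh₁ adjh₀ rH.hom).app (f₁.obj (uD.obj X)) ≫
        hR₀.map (rΦ.inv.app (uD.obj X)) ≫ hR₀.map (f₀.map (ρD.hom.app X)))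
      ?_ ?_ ?_ ?_
    · -- comm1
      have hc1 := mate_cube adjp₀ adjh₀ adjp₁ adjh₁ α₀ α₁ uC uD uE uF uP uH uQ uΦ cubeU X
      simp only [Category.assoc, ← Functor.map_comp]
      rw [hc1]
      simp only [Iso.inv_hom_id_app_assoc]
      rw [Functor.map_comp]
      slice_lhs 1 2 => rw [← Functor.comp_map uE rE, ← ρE.inv.naturality]
      simp
    · -- comm2
      have hc2 := mate_cube adjp₁ adjh₁ adjp₀ adjh₀ α₁ α₀ rC rD rE rF rP rH rQ rΦ cubeR
        (uD.obj X)
      have hn := (mateEquiv adjp₀ adjh₀ α₀).naturality (ρD.hom.app X)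
      simp only [Functor.id_obj, Functor.comp_obj] at hn
      simp only [Functor.comp_obj] at hc2
      simp only [Category.assoc]
      slice_lhs 3 4 => rw [← Functor.comp_map pR₀ q₀, hn]
      slice_lhs 2 3 => rw [hc2]
      simp [Iso.inv_hom_id_app_assoc]
    · -- i ≫ r = 𝟙
      have hret := mate_retract adjp₀ adjp₁ uC uD rC rD ρC ρD uP rP compP X
      have hQ : rE.map (uQ.inv.app (pR₀.obj X)) ≫ rQ.inv.app (uC.obj (pR₀.obj X)) ≫
          q₀.map (ρC.hom.app (pR₀.obj X)) = ρE.hom.app (q₀.obj (pR₀.obj X)) := by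
        rw [← compQ (pR₀.obj X), Iso.inv_hom_id_app_assoc, ← Functor.map_comp_assoc,
          Iso.inv_hom_id_app]
        simp
      simp only [Category.assoc]
      slice_lhs 3 4 => rw [← Functor.comp_map q₁ rE, rQ.inv.naturality]
      slice_lhs 4 5 => rw [Functor.comp_map, ← q₀.map_comp, hret]
      simp only [Category.assoc, Functor.map_comp]
      slice_lhs 5 6 => rw [← q₀.map_comp, ← pR₀.map_comp, Iso.inv_hom_id_app]
      simp only [CategoryTheory.Functor.id_obj]
      rw [CategoryTheory.Functor.map_id, CategoryTheory.Functor.map_id, Category.comp_id, hQ]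
      exact ρE.inv_hom_id_app _
    · -- i' ≫ r' = 𝟙
      have hret2 := mate_retract adjh₀ adjh₁ uE uF rE rF ρE ρF uH rH compH (f₀.obj X)
      have hΦ : rF.map (uΦ.inv.app X) ≫ rΦ.inv.app (uD.obj X) ≫ f₀.map (ρD.hom.app X) =
          ρF.hom.app (f₀.obj X) := by
        rw [← compΦ X, Iso.inv_hom_id_app_assoc, ← Functor.map_comp_assoc,
          Iso.inv_hom_id_app]
        simp
      simp only [Category.assoc]
      slice_lhs 3 4 => rw [← Functor.comp_map hR₁ rE,
        (mateEquiv adjh₁ adjh₀ rH.hom).naturality]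
      slice_lhs 2 3 => rw [hret2]
      simp only [Category.assoc, Iso.inv_hom_id_app_assoc, Functor.comp_map]
      slice_lhs 2 4 => rw [← hR₀.map_comp, ← hR₀.map_comp, hΦ]
      rw [← hR₀.map_comp, Iso.inv_hom_id_app]
      exact hR₀.map_id _
  exact NatIso.isIso_of_isIso_app _
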